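/- If B is a symmetric 2-(36,15,6) design admitting an automorphism of order two with f fixed points, and the F₃-row span of the incidence matrix of B is a self-dual ternary code of length 36, then f = 4 or f = 12. -/

import Mathlib

open Finset Matrix Module
open LinearMap (BilinForm)

/-- A symmetric 2-(36,15,6) design, given as a list of 36 blocks on the point set `Fin 36`:
every block has 15 points and every two distinct points lie in exactly 6 common blocks. -/
def IsDesign (B : Fin 36 → Finset (Fin 36)) : Prop :=
  (∀ i, (B i).card = 15) ∧
    ∀ x y : Fin 36, x ≠ y →
      (Finset.univ.filter fun i => x ∈ B i ∧ y ∈ B i).card = 6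

/-- `B` admits an automorphism of order two fixing exactly `f` points. -/
def HasOrder2AutWithFixed (B : Fin 36 → Finset (Fin 36)) (f : ℕ) : Prop :=
  ∃ φ ψ : Equiv.Perm (Fin 36),
    (∀ i, B (ψ i) = (B i).image φ) ∧
    (⇑φ ∘ ⇑φ = id) ∧ ⇑φ ≠ (id : Fin 36 → Fin 36) ∧
    (Finset.univ.filter fun x => φ x = x).card = f

/-- The `F₃`-row span of the incidence matrix of the design `B`. -/
def rowSpan (B : Fin 36 → Finset (Fin 36)) : Submodule (ZMod 3) (Fin 36 → ZMod 3) :=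
  Submodule.span (ZMod 3)
    (Set.range fun i => fun x => if x ∈ B i then (1 : ZMod 3) else 0)

/-- `C` is a self-dual ternary code of length 36: it coincides with its orthogonal
complement with respect to the standard dot product on `(ZMod 3)^36`. -/
def IsSelfDualCode (C : Submodule (ZMod 3) (Fin 36 → ZMod 3)) : Prop :=
  ∀ x : Fin 36 → ZMod 3, x ∈ C ↔ ∀ y ∈ C, ∑ i, x i * y i = 0

section Helpers

lemma sign_sumComm (s : ℕ) :
    Equiv.Perm.sign (Equiv.sumComm (Fin s) (Fin s) : Equiv.Perm (Fin s ⊕ Fin s)) = (-1)^s := by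
  have h := Equiv.Perm.sign_eq_sign_of_equiv
    (Equiv.prodCongrRight (fun _ : Fin s => (Equiv.swap true false : Equiv.Perm Bool)))
    (Equiv.sumComm (Fin s) (Fin s))
    ((Equiv.boolProdEquivSum (Fin s)).symm.trans (Equiv.prodComm _ _) |>.symm)
    ?_
  · rw [← h, Equiv.Perm.sign_prodCongrRight]
    simp [Equiv.Perm.sign_swap]
  · rintro ⟨k, b⟩
    cases b <;> rfl

/-- A ternary self-dual code has length divisible by 4. -/
lemma four_dvd_of_selfdual {m : ℕ} (L : Submodule (ZMod 3) (Fin m → ZMod 3))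
    (hL : ∀ x, x ∈ L ↔ ∀ y ∈ L, ∑ i, x i * y i = 0) : 4 ∣ m := by
  classical
  set Bf : BilinForm (ZMod 3) (Fin m → ZMod 3) := Matrix.toBilin' 1 with hBfdef
  have hBf : ∀ x y : Fin m → ZMod 3, Bf x y = ∑ i, x i * y i := by
    intro x y
    rw [hBfdef, Matrix.toBilin'_apply']
    simp [dotProduct]
  have hsymm : ∀ x y, Bf x y = Bf y x := by
    intro x y; rw [hBf, hBf]; exact Finset.sum_congr rfl (fun i _ => mul_comm _ _)
  have hrefl : Bf.IsRefl := fun x y h => by rw [hsymm] at h; exact h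
  have hnd : Bf.Nondegenerate := by
    have hsep : ∀ v, (∀ y, Bf v y = 0) → v = 0 := by
      intro v hv
      funext i
      have := hv (Pi.single i 1)
      rw [hBf] at this
      simpa [Pi.single_apply, Finset.sum_ite_eq'] using this
    exact ⟨hsep, fun v hv => hsep v (fun y => by rw [hsymm]; exact hv y)⟩
  have horth : Bf.orthogonal L = L := by
    ext x
    rw [LinearMap.BilinForm.mem_orthogonal_iff, hL x]
    constructor
    · intro h y hy; rw [← hBf, hsymm]; exact h y hy
    · intro h n hn; rw [hsymm, hBf]; exact h n hn
  have hfinV : finrank (ZMod 3) (Fin m → ZMod 3) = m := by simp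
  have hle : finrank (ZMod 3) L ≤ m := by
    have := Submodule.finrank_le L
    rwa [hfinV] at this
  have hms : m = finrank (ZMod 3) L + finrank (ZMod 3) L := by
    have h2 := LinearMap.BilinForm.finrank_orthogonal hnd L
    rw [horth, hfinV] at h2
    omega
  set s := finrank (ZMod 3) L with hs
  obtain ⟨W, hW⟩ := Submodule.exists_isCompl L
  have hfinW : finrank (ZMod 3) W = s := by
    have := Submodule.finrank_add_eq_of_isCompl hW
    rw [hfinV] at this; omega
  let bL : Basis (Fin s) (ZMod 3) L := Module.finBasisOfFinrankEq (ZMod 3) L rfl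
  let bW : Basis (Fin s) (ZMod 3) W := Module.finBasisOfFinrankEq (ZMod 3) W hfinW
  let bV : Basis (Fin s ⊕ Fin s) (ZMod 3) (Fin m → ZMod 3) :=
    (bL.prod bW).map (Submodule.prodEquivOfIsCompl L W hW)
  have hbVl : ∀ i, bV (Sum.inl i) = (bL i : Fin m → ZMod 3) := by
    intro i
    simp [bV, Basis.prod_apply, Submodule.coe_prodEquivOfIsCompl]
  have hbVr : ∀ i, bV (Sum.inr i) = (bW i : Fin m → ZMod 3) := by
    intro i
    simp [bV, Basis.prod_apply, Submodule.coe_prodEquivOfIsCompl]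
  set G : Matrix (Fin s ⊕ Fin s) (Fin s ⊕ Fin s) (ZMod 3) := LinearMap.BilinForm.toMatrix bV Bf with hG
  let e : Fin m ≃ (Fin s ⊕ Fin s) := (finCongr hms).trans finSumFinEquiv.symm
  let b₀ : Basis (Fin s ⊕ Fin s) (ZMod 3) (Fin m → ZMod 3) := (Pi.basisFun (ZMod 3) (Fin m)).reindex e
  have hb₀ : LinearMap.BilinForm.toMatrix b₀ Bf = 1 := by
    ext k l
    rw [BilinForm.toMatrix_apply, hBf]
    simp [b₀, Pi.basisFun_apply, Pi.single_apply, Matrix.one_apply,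
      Finset.sum_ite_eq', EmbeddingLike.apply_eq_iff_eq, eq_comm]
  have hdetG : G.det = (b₀.toMatrix bV).det * (b₀.toMatrix bV).det := by
    have h3 := BilinForm.toMatrix_mul_basis_toMatrix b₀ bV Bf
    rw [hb₀] at h3
    rw [hG, ← h3]
    rw [Matrix.det_mul, Matrix.det_mul, Matrix.det_transpose, Matrix.det_one]
    ring
  have hdetT : (b₀.toMatrix bV).det ≠ 0 := by
    intro h
    have h2 := congrArg Matrix.det (Basis.toMatrix_mul_toMatrix_flip b₀ bV)
    rw [Matrix.det_mul, h, Matrix.det_one, zero_mul] at h2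
    exact zero_ne_one h2
  have hdetGne : G.det ≠ 0 := by rw [hdetG]; exact mul_ne_zero hdetT hdetT
  set M : Matrix (Fin s) (Fin s) (ZMod 3) := fun i j => G (Sum.inl i) (Sum.inr j) with hM
  set N : Matrix (Fin s) (Fin s) (ZMod 3) := fun i j => G (Sum.inr i) (Sum.inr j) with hN
  have hGsymm : ∀ k l, G k l = G l k := by
    intro k l
    rw [hG, BilinForm.toMatrix_apply, BilinForm.toMatrix_apply, hsymm]
  have hGblocks : G = Matrix.fromBlocks 0 M Mᵀ N := by
    ext k l
    rcases k with i | i <;> rcases l with j | j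
    · show G _ _ = 0
      rw [hG, BilinForm.toMatrix_apply, hbVl, hbVl, hBf]
      exact (hL _).mp (bL i).2 _ (bL j).2
    · rfl
    · show G _ _ = Mᵀ i j
      rw [Matrix.transpose_apply, hM, hGsymm]
    · rfl
  have hdetM : M.det ≠ 0 := by
    intro hdM
    obtain ⟨u, hu0, hu⟩ := (Matrix.exists_vecMul_eq_zero_iff (M := M)).mpr hdM
    apply hdetGne
    apply Matrix.exists_vecMul_eq_zero_iff.mp
    refine ⟨Sum.elim u 0, ?_, ?_⟩
    · intro hcon
      apply hu0
      funext i
      exact congrFun hcon (Sum.inl i)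
    · rw [hGblocks]
      funext l
      rcases l with j | j
      · simp [Matrix.vecMul_fromBlocks, Sum.elim_comp_inl, Sum.elim_comp_inr]
      · simp [Matrix.vecMul_fromBlocks, Sum.elim_comp_inl, Sum.elim_comp_inr, hu]
  have hinvM : IsUnit M.det := isUnit_iff_ne_zero.mpr hdetM
  have hred : Matrix.fromBlocks (1 : Matrix (Fin s) (Fin s) (ZMod 3)) 0 (-(N * M⁻¹)) 1 * G
      = Matrix.fromBlocks 0 M Mᵀ 0 := by
    rw [hGblocks, Matrix.fromBlocks_multiply]
    congr 1 <;> simp [Matrix.neg_mul, Matrix.mul_assoc, Matrix.nonsing_inv_mul M hinvM]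
  have hdet1 : (Matrix.fromBlocks (1 : Matrix (Fin s) (Fin s) (ZMod 3)) 0 (-(N * M⁻¹)) 1).det = 1 := by
    rw [Matrix.det_fromBlocks_zero₁₂]
    simp
  have hJ : Matrix.fromBlocks (0 : Matrix (Fin s) (Fin s) (ZMod 3)) M Mᵀ 0
      = Matrix.fromBlocks M 0 0 Mᵀ *
        (Equiv.Perm.permMatrix (ZMod 3) (Equiv.sumComm (Fin s) (Fin s))) := by
    have hperm : (Equiv.Perm.permMatrix (ZMod 3) (Equiv.sumComm (Fin s) (Fin s)))
        = Matrix.fromBlocks 0 1 1 0 := by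
      ext k l
      rcases k with i | i <;> rcases l with j | j <;>
        simp [Equiv.Perm.permMatrix, PEquiv.toMatrix, Equiv.toPEquiv, Matrix.one_apply, eq_comm]
    rw [hperm, Matrix.fromBlocks_multiply]
    simp
  have hdetGval : G.det = (-1)^s * (M.det * M.det) := by
    have h4 := congrArg Matrix.det hred
    rw [Matrix.det_mul, hdet1, one_mul] at h4
    rw [h4, hJ, Matrix.det_mul, Matrix.det_fromBlocks_zero₁₂, Matrix.det_permutation,
      sign_sumComm, Matrix.det_transpose]
    simp only [Units.val_pow_eq_pow_val, Units.val_neg, Units.val_one, Int.cast_pow,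
      Int.cast_neg, Int.cast_one]
    ring
  have hsq : ∀ a : ZMod 3, a ≠ 0 → a * a = 1 := by decide
  have hfinal : ((-1 : ZMod 3))^s = 1 := by
    have h5 : (b₀.toMatrix bV).det * (b₀.toMatrix bV).det = (-1)^s * (M.det * M.det) := by
      rw [← hdetG, hdetGval]
    rw [hsq _ hdetT, hsq _ hdetM, mul_one] at h5
    exact h5.symm
  have hseven : Even s := by
    by_contra hodd
    rw [Odd.neg_one_pow (Nat.not_even_iff_odd.mp hodd)] at hfinal
    exact absurd hfinal (by decide)
  obtain ⟨u, hu⟩ := hseven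
  exact ⟨u, by omega⟩

lemma design_r {B : Fin 36 → Finset (Fin 36)} (hB : IsDesign B) (x : Fin 36) :
    (Finset.univ.filter fun i => x ∈ B i).card = 15 := by
  classical
  have key : ∑ y ∈ Finset.univ.erase x,
      (Finset.univ.filter fun i => x ∈ B i ∧ y ∈ B i).card = 210 := by
    rw [Finset.sum_congr rfl (fun y hy => hB.2 x y (Ne.symm (Finset.ne_of_mem_erase hy)))]
    simp [Finset.card_erase_of_mem]
  have key2 : ∑ y ∈ Finset.univ.erase x,
      (Finset.univ.filter fun i => x ∈ B i ∧ y ∈ B i).card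
      = 14 * (Finset.univ.filter fun i => x ∈ B i).card := by
    simp only [Finset.card_filter]
    rw [Finset.sum_comm]
    rw [Finset.mul_sum]
    refine Finset.sum_congr rfl (fun i _ => ?_)
    by_cases hx : x ∈ B i
    · have : ∀ y ∈ Finset.univ.erase x, (if x ∈ B i ∧ y ∈ B i then (1:ℕ) else 0)
          = if y ∈ (B i).erase x then 1 else 0 := by
        intro y hy
        have hyx : y ≠ x := Finset.ne_of_mem_erase hy
        simp [hx, Finset.mem_erase, hyx]
      rw [Finset.sum_congr rfl this]
      rw [← Finset.card_filter]
      have : (Finset.univ.erase x).filter (fun y => y ∈ (B i).erase x) = (B i).erase x := by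
        ext y
        simp only [Finset.mem_filter, Finset.mem_erase, Finset.mem_univ, true_and]
        tauto
      rw [this, Finset.card_erase_of_mem hx, hB.1 i]
      simp [hx]
    · simp [hx]
  omega

lemma design_inter {B : Fin 36 → Finset (Fin 36)} (hB : IsDesign B) (i0 i : Fin 36)
    (hne : i ≠ i0) : (B i0 ∩ B i).card = 6 := by
  classical
  set n : Fin 36 → ℕ := fun j => (B i0 ∩ B j).card with hn
  have hcard : ∀ j, n j = ∑ x ∈ B i0, (if x ∈ B j then (1:ℕ) else 0) := by
    intro j
    rw [hn, ← Finset.card_filter, Finset.filter_mem_eq_inter]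
  have hS1 : ∑ j, n j = 225 := by
    simp only [hcard]
    rw [Finset.sum_comm]
    have : ∀ x ∈ B i0, ∑ j, (if x ∈ B j then (1:ℕ) else 0) = 15 := by
      intro x _
      rw [← Finset.card_filter]
      exact design_r hB x
    rw [Finset.sum_congr rfl this, Finset.sum_const, hB.1 i0, smul_eq_mul]
  have hS2 : ∑ j, n j * n j = 1485 := by
    have expand : ∀ j, n j * n j
        = ∑ x ∈ B i0, ∑ y ∈ B i0, (if x ∈ B j ∧ y ∈ B j then (1:ℕ) else 0) := by
      intro j
      rw [hcard, Finset.sum_mul_sum]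
      refine Finset.sum_congr rfl fun x _ => Finset.sum_congr rfl fun y _ => ?_
      by_cases h1 : x ∈ B j <;> by_cases h2 : y ∈ B j <;> simp [h1, h2]
    simp only [expand]
    rw [Finset.sum_comm]
    have inner : ∀ x ∈ B i0, ∑ j, ∑ y ∈ B i0, (if x ∈ B j ∧ y ∈ B j then (1:ℕ) else 0) = 99 := by
      intro x hx
      rw [Finset.sum_comm]
      have hyval : ∀ y ∈ B i0, ∑ j, (if x ∈ B j ∧ y ∈ B j then (1:ℕ) else 0)
          = if x = y then 15 else 6 := by
        intro y _
        rw [← Finset.card_filter]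
        by_cases hxy : x = y
        · subst hxy
          simp only [and_self, if_true]
          exact design_r hB x
        · rw [if_neg hxy]
          exact hB.2 x y hxy
      rw [Finset.sum_congr rfl hyval]
      have : ∀ y ∈ B i0, (if x = y then (15:ℕ) else 6) = 6 + (if x = y then 9 else 0) := by
        intro y _
        by_cases hxy : x = y <;> simp [hxy]
      rw [Finset.sum_congr rfl this, Finset.sum_add_distrib, Finset.sum_const, hB.1 i0,
        Finset.sum_ite_eq, if_pos hx, smul_eq_mul]
    rw [Finset.sum_congr rfl inner, Finset.sum_const, hB.1 i0, smul_eq_mul]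
  have hni0 : n i0 = 15 := by
    rw [hn]; simp [Finset.inter_self, hB.1 i0]
  have hg1 : ∑ j, ((n j : ℤ)) = 225 := by
    rw [← Nat.cast_sum, hS1]; rfl
  have hg2 : ∑ j, ((n j : ℤ) * (n j : ℤ)) = 1485 := by
    have : ∑ j, ((n j : ℤ) * (n j : ℤ)) = ((∑ j, n j * n j : ℕ) : ℤ) := by
      rw [Nat.cast_sum]; push_cast; rfl
    rw [this, hS2]; rfl
  have huniv : ∑ j, ((n j : ℤ) - 6)^2 = 81 := by
    have expand : ∀ j : Fin 36, ((n j : ℤ) - 6)^2 = (n j : ℤ) * (n j : ℤ) - 12 * (n j : ℤ) + 36 := by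
      intro j; ring
    rw [Finset.sum_congr rfl (fun j _ => expand j), Finset.sum_add_distrib,
      Finset.sum_sub_distrib, hg2, ← Finset.mul_sum, hg1, Finset.sum_const]
    simp
  have herase : ∑ j ∈ Finset.univ.erase i0, ((n j : ℤ) - 6)^2 = 0 := by
    rw [Finset.sum_erase_eq_sub (Finset.mem_univ i0), huniv, hni0]
    norm_num
  have := (Finset.sum_eq_zero_iff_of_nonneg (fun j _ => sq_nonneg ((n j : ℤ) - 6))).mp herase
    i (Finset.mem_erase.mpr ⟨hne, Finset.mem_univ i⟩)
  have h6 : (n i : ℤ) = 6 := by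
    have := pow_eq_zero_iff (n := 2) (by norm_num) |>.mp this
    linarith [this]
  exact_mod_cast h6

end Helpers

theorem selfdual_code_fixed_points (B : Fin 36 → Finset (Fin 36)) (f : ℕ)
    (hB : IsDesign B) (hA : HasOrder2AutWithFixed B f)
    (hC : IsSelfDualCode (rowSpan B)) :
    f = 4 ∨ f = 12 := by
  classical
  obtain ⟨φ, ψ, hψ, hinv, hneid, hf⟩ := hA
  set C := rowSpan B with hCdef
  have hφφ : ∀ x, φ (φ x) = x := fun x => congrFun hinv x
  have hmemψ : ∀ j x, x ∈ B (ψ j) ↔ φ x ∈ B j := by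
    intro j x
    rw [hψ j]
    constructor
    · rintro hmem
      obtain ⟨y, hy, hyx⟩ := Finset.mem_image.mp hmem
      have : y = φ x := by rw [← hyx, hφφ]
      rwa [← this]
    · intro hmem
      refine Finset.mem_image.mpr ⟨φ x, hmem, hφφ x⟩
  -- part 1 : f ≤ 18
  have hf18 : f ≤ 18 := by
    have hex : ∃ i, (B i).image φ ≠ B i := by
      by_contra hcon
      push_neg at hcon
      obtain ⟨x, hx⟩ : ∃ x, φ x ≠ x := by
        by_contra hall; push_neg at hall; exact hneid (funext hall)
      have hsub : (Finset.univ.filter fun i => x ∈ B i)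
          ⊆ (Finset.univ.filter fun i => x ∈ B i ∧ φ x ∈ B i) := by
        intro i hi
        simp only [Finset.mem_filter, Finset.mem_univ, true_and] at *
        exact ⟨hi, by rw [← hcon i]; exact Finset.mem_image_of_mem φ hi⟩
      have h15 := design_r hB x
      have h6 := hB.2 x (φ x) (Ne.symm hx)
      have := Finset.card_le_card hsub
      omega
    obtain ⟨i, hi⟩ := hex
    have hψne : ψ i ≠ i := fun h => hi (by rw [← hψ i, h])
    have hinter : (B i ∩ B (ψ i)).card = 6 := design_inter hB i (ψ i) hψne
    have hSsub : (Finset.univ.filter fun x => φ x = x)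
        ⊆ (B i ∩ B (ψ i)) ∪ (Finset.univ \ (B i ∪ B (ψ i))) := by
      intro x hx
      have hfix : φ x = x := (Finset.mem_filter.mp hx).2
      by_cases hxB : x ∈ B i
      · apply Finset.mem_union_left
        refine Finset.mem_inter.mpr ⟨hxB, ?_⟩
        rw [hmemψ i x, hfix]
        exact hxB
      · apply Finset.mem_union_right
        rw [Finset.mem_sdiff]
        refine ⟨Finset.mem_univ x, ?_⟩
        rw [Finset.mem_union]
        rintro (h | h)
        · exact hxB h
        · rw [hmemψ i x, hfix] at h
          exact hxB h
    have hcardU : (B i ∪ B (ψ i)).card = 24 := by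
      have := Finset.card_union_add_card_inter (B i) (B (ψ i))
      rw [hB.1 i, hB.1 (ψ i), hinter] at this
      omega
    have h1 := Finset.card_le_card hSsub
    have h2 := Finset.card_union_le (B i ∩ B (ψ i)) (Finset.univ \ (B i ∪ B (ψ i)))
    have h3 : (Finset.univ \ (B i ∪ B (ψ i))).card = 36 - 24 := by
      rw [Finset.card_sdiff_of_subset (Finset.subset_univ _), hcardU]
      simp
    rw [hf] at h1
    omega
  -- part 2 : code-theoretic constraint
  set R : Finset (Fin 36) := Finset.univ.filter (fun x => x < φ x) with hRdef
  set R' : Finset (Fin 36) := Finset.univ.filter (fun x => φ x < x) with hR'def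
  set t := R.card with htdef
  have hmemR : ∀ x, x ∈ R ↔ x < φ x := by intro x; simp [hRdef]
  have hmemR' : ∀ x, x ∈ R' ↔ φ x < x := by intro x; simp [hR'def]
  have hRmap : ∀ x ∈ R, φ x ∈ R' := by
    intro x hx
    rw [hmemR] at hx
    rw [hmemR', hφφ]
    exact hx
  have hR'map : ∀ x ∈ R', φ x ∈ R := by
    intro x hx
    rw [hmemR'] at hx
    rw [hmemR, hφφ]
    exact hx
  have hcardR' : R'.card = t := by
    rw [htdef]
    apply Finset.card_nbij (fun x => φ x) hR'map
    · intro a ha b hb hab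
      exact φ.injective hab
    · intro a ha
      simp only [Set.mem_image]
      refine ⟨φ a, ?_, hφφ a⟩
      have : φ a ∈ R' := hRmap a ?_
      · simpa using this
      · simpa using ha
  have hpart : f + 2 * t = 36 := by
    have h1 := Finset.card_filter_add_card_filter_not
      (s := (Finset.univ : Finset (Fin 36))) (p := fun x => φ x = x)
    have h2 : Finset.univ.filter (fun x => ¬ φ x = x) = R ∪ R' := by
      ext x
      simp only [Finset.mem_filter, Finset.mem_univ, true_and, Finset.mem_union, hmemR, hmemR']
      constructor
      · intro h
        rcases lt_or_gt_of_ne (Ne.symm h) with h' | h'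
        · exact Or.inl h'
        · exact Or.inr h'
      · rintro (h | h)
        exacts [ne_of_gt h, ne_of_lt h]
    have hdisj : Disjoint R R' := by
      rw [Finset.disjoint_left]
      intro x hx hx'
      rw [hmemR] at hx
      rw [hmemR'] at hx'
      exact absurd (hx.trans hx') (lt_irrefl x)
    rw [h2, Finset.card_union_of_disjoint hdisj, hcardR', hf] at h1
    simp only [Finset.card_univ, Fintype.card_fin] at h1
    omega
  -- the C-invariance
  let T : (Fin 36 → ZMod 3) →ₗ[ZMod 3] (Fin 36 → ZMod 3) :=
    { toFun := fun v => v ∘ φ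
      map_add' := fun u v => rfl
      map_smul' := fun c v => rfl }
  have hTC : ∀ c, c ∈ C → (fun x => c (φ x)) ∈ C := by
    intro c hc
    have hmap : Submodule.map T C ≤ C := by
      rw [hCdef, rowSpan, Submodule.map_span]
      apply Submodule.span_le.mpr
      rintro _ ⟨_, ⟨j, rfl⟩, rfl⟩
      apply Submodule.subset_span
      refine ⟨ψ j, ?_⟩
      funext x
      show (if x ∈ B (ψ j) then (1:ZMod 3) else 0) = (if φ x ∈ B j then (1:ZMod 3) else 0)
      by_cases hmem : φ x ∈ B j
      · rw [if_pos hmem, if_pos ((hmemψ j x).mpr hmem)]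
      · rw [if_neg hmem, if_neg (fun h => hmem ((hmemψ j x).mp h))]
    exact hmap ⟨c, hc, rfl⟩
  -- sums over the partition
  have hSzero : ∀ u : Fin 36 → ZMod 3, (∀ x, u (φ x) = - u x) →
      ∀ x, φ x = x → u x = 0 := by
    intro u hu x hx
    have := hu x
    rw [hx] at this
    have h2 : ∀ a : ZMod 3, a = -a → a = 0 := by decide
    exact h2 _ this
  have hsplit : ∀ F : Fin 36 → ZMod 3,
      ∑ x, F x = (∑ x ∈ Finset.univ.filter (fun x => φ x = x), F x)
        + ((∑ x ∈ R, F x) + (∑ x ∈ R', F x)) := by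
    intro F
    have h2 : Finset.univ.filter (fun x => ¬ φ x = x) = R ∪ R' := by
      ext x
      simp only [Finset.mem_filter, Finset.mem_univ, true_and, Finset.mem_union, hmemR, hmemR']
      constructor
      · intro h
        rcases lt_or_gt_of_ne (Ne.symm h) with h' | h'
        · exact Or.inl h'
        · exact Or.inr h'
      · rintro (h | h)
        exacts [ne_of_gt h, ne_of_lt h]
    have hdisj : Disjoint R R' := by
      rw [Finset.disjoint_left]
      intro x hx hx'
      rw [hmemR] at hx
      rw [hmemR'] at hx'
      exact absurd (hx.trans hx') (lt_irrefl x)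
    rw [← Finset.sum_filter_add_sum_filter_not Finset.univ (fun x => φ x = x) F, h2,
      Finset.sum_union hdisj]
  have hsumR' : ∀ F : Fin 36 → ZMod 3, ∑ x ∈ R', F x = ∑ x ∈ R, F (φ x) := by
    intro F
    exact Finset.sum_nbij' (fun x => φ x) (fun x => φ x) hR'map hRmap
      (fun a _ => hφφ a) (fun a _ => hφφ a) (fun a _ => by rw [hφφ a])
  -- key sum identities
  have hA2 : ∀ u v : Fin 36 → ZMod 3, (∀ x, u (φ x) = - u x) → (∀ x, v (φ x) = - v x) →
      ∑ x, u x * v x = 2 * ∑ x ∈ R, u x * v x := by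
    intro u v hu hv
    rw [hsplit (fun x => u x * v x)]
    have hz : ∑ x ∈ Finset.univ.filter (fun x => φ x = x), u x * v x = 0 := by
      apply Finset.sum_eq_zero
      intro x hx
      rw [hSzero u hu x (Finset.mem_filter.mp hx).2, zero_mul]
    rw [hz, zero_add, hsumR' (fun x => u x * v x)]
    have : ∀ x ∈ R, u (φ x) * v (φ x) = u x * v x := by
      intro x _
      rw [hu, hv]
      ring
    rw [Finset.sum_congr rfl this]
    ring
  have hB2 : ∀ u v : Fin 36 → ZMod 3, (∀ x, u (φ x) = - u x) → (∀ x, v (φ x) = v x) →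
      ∑ x, u x * v x = 0 := by
    intro u v hu hv
    rw [hsplit (fun x => u x * v x)]
    have hz : ∑ x ∈ Finset.univ.filter (fun x => φ x = x), u x * v x = 0 := by
      apply Finset.sum_eq_zero
      intro x hx
      rw [hSzero u hu x (Finset.mem_filter.mp hx).2, zero_mul]
    rw [hz, zero_add, hsumR' (fun x => u x * v x)]
    have : ∀ x ∈ R, u (φ x) * v (φ x) = - (u x * v x) := by
      intro x _
      rw [hu, hv]
      ring
    rw [Finset.sum_congr rfl this]
    simp
  -- the negative-eigenspace code
  let eR : {x // x ∈ R} ≃ Fin t := Fintype.equivFinOfCardEq (by rw [Fintype.card_coe])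
  let Φ : (Fin 36 → ZMod 3) →ₗ[ZMod 3] (Fin t → ZMod 3) :=
    { toFun := fun v k => v ((eR.symm k : {x // x ∈ R}) : Fin 36)
      map_add' := fun u v => rfl
      map_smul' := fun c v => rfl }
  have hsumΦ : ∀ u v : Fin 36 → ZMod 3,
      ∑ k, Φ u k * Φ v k = ∑ x ∈ R, u x * v x := by
    intro u v
    have h1 : ∑ k, Φ u k * Φ v k
        = ∑ a : {x // x ∈ R}, u (a : Fin 36) * v (a : Fin 36) :=
      Equiv.sum_comp eR.symm (fun a => u (a : Fin 36) * v (a : Fin 36))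
    rw [h1, Finset.sum_coe_sort_eq_attach]
    exact Finset.sum_attach R (fun x => u x * v x)
  set Vneg : Submodule (ZMod 3) (Fin 36 → ZMod 3) := LinearMap.ker (T + LinearMap.id) with hVdef
  have hmemV : ∀ v, v ∈ Vneg ↔ ∀ x, v (φ x) = - v x := by
    intro v
    rw [hVdef, LinearMap.mem_ker]
    constructor
    · intro h x
      have := congrFun h x
      simp only [LinearMap.add_apply, LinearMap.id_apply, Pi.add_apply] at this
      have h2 : v (φ x) + v x = 0 := this
      exact eq_neg_of_add_eq_zero_left h2
    · intro h
      funext x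
      show v (φ x) + v x = 0
      rw [h x]
      ring
  set L : Submodule (ZMod 3) (Fin t → ZMod 3) := Submodule.map Φ (C ⊓ Vneg) with hLdef
  have htwo : ∀ a : ZMod 3, 2 * a = 0 → a = 0 := by decide
  have hLsd : ∀ w, w ∈ L ↔ ∀ y ∈ L, ∑ k, w k * y k = 0 := by
    intro w
    constructor
    · rintro ⟨u, hu, rfl⟩ y ⟨v, hv, rfl⟩
      obtain ⟨huC, huV⟩ := Submodule.mem_inf.mp hu
      obtain ⟨hvC, hvV⟩ := Submodule.mem_inf.mp hv
      have h0 : ∑ x, u x * v x = 0 := (hC u).mp huC v hvC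
      rw [hA2 u v ((hmemV u).mp huV) ((hmemV v).mp hvV)] at h0
      rw [hsumΦ u v]
      exact htwo _ h0
    · intro hw
      set wt : Fin 36 → ZMod 3 := fun x =>
        if h : x ∈ R then w (eR ⟨x, h⟩)
        else if h' : φ x ∈ R then - w (eR ⟨φ x, h'⟩) else 0 with hwt
      have hwneg : ∀ x, wt (φ x) = - wt x := by
        intro x
        by_cases hx : x ∈ R
        · have hφx : φ x ∉ R := by
            rw [hmemR, hφφ]
            rw [hmemR] at hx
            exact fun h => absurd (hx.trans h) (lt_irrefl x)
          have hx' : φ (φ x) ∈ R := by rw [hφφ]; exact hx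
          simp only [hwt]
          rw [dif_neg hφx, dif_pos hx', dif_pos hx]
          have heq : (⟨φ (φ x), hx'⟩ : {a // a ∈ R}) = ⟨x, hx⟩ := Subtype.ext (hφφ x)
          rw [heq]
        · by_cases hφx : φ x ∈ R
          · simp only [hwt]
            rw [dif_pos hφx, dif_neg hx, dif_pos hφx, neg_neg]
          · have hx' : φ (φ x) ∉ R := by rw [hφφ]; exact hx
            simp only [hwt]
            rw [dif_neg hφx, dif_neg hx', dif_neg hx, dif_neg hφx, neg_zero]
      have hΦwt : Φ wt = w := by
        funext k
        show wt ((eR.symm k : {x // x ∈ R}) : Fin 36) = w k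
        simp only [hwt]
        rw [dif_pos (eR.symm k).2]
        congr 1
        rw [Subtype.coe_eta]
        exact Equiv.apply_symm_apply eR k
      have hwtC : wt ∈ C := by
        apply (hC wt).mpr
        intro c hcC
        have hcφ : (fun x => c (φ x)) ∈ C := hTC c hcC
        set cp : Fin 36 → ZMod 3 := fun x => (2:ZMod 3) * (c x + c (φ x)) with hcp
        set cm : Fin 36 → ZMod 3 := fun x => (2:ZMod 3) * (c x - c (φ x)) with hcm
        have hdec : ∀ x, c x = cp x + cm x := by
          intro x
          simp only [hcp, hcm]
          have h4 : ∀ a b : ZMod 3, a = 2*(a+b) + 2*(a-b) := by decide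
          exact h4 (c x) (c (φ x))
        have hcpC : cp ∈ C := by
          have heq : cp = (2:ZMod 3) • (c + (fun x => c (φ x))) := by
            funext x; simp [hcp, smul_eq_mul]
          rw [heq]
          exact Submodule.smul_mem C _ (Submodule.add_mem C hcC hcφ)
        have hcmC : cm ∈ C := by
          have heq : cm = (2:ZMod 3) • (c - (fun x => c (φ x))) := by
            funext x; simp [hcm, smul_eq_mul]
          rw [heq]
          exact Submodule.smul_mem C _ (Submodule.sub_mem C hcC hcφ)
        have hcpP : ∀ x, cp (φ x) = cp x := by
          intro x
          simp only [hcp]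
          rw [hφφ]
          ring
        have hcmN : ∀ x, cm (φ x) = - cm x := by
          intro x
          simp only [hcm]
          rw [hφφ]
          ring
        have hsum1 : ∑ x, wt x * cp x = 0 := hB2 wt cp hwneg hcpP
        have hsum2 : ∑ x, wt x * cm x = 0 := by
          rw [hA2 wt cm hwneg hcmN, ← hsumΦ wt cm, hΦwt]
          have hmemL : Φ cm ∈ L := ⟨cm, Submodule.mem_inf.mpr ⟨hcmC, (hmemV cm).mpr hcmN⟩, rfl⟩
          rw [hw (Φ cm) hmemL, mul_zero]
        calc ∑ x, wt x * c x = ∑ x, (wt x * cp x + wt x * cm x) := by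
              refine Finset.sum_congr rfl fun x _ => ?_
              rw [← mul_add, ← hdec x]
          _ = 0 := by rw [Finset.sum_add_distrib, hsum1, hsum2, add_zero]
      have hmemI : wt ∈ C ⊓ Vneg := Submodule.mem_inf.mpr ⟨hwtC, (hmemV wt).mpr hwneg⟩
      exact ⟨wt, hmemI, hΦwt⟩
  have hdvd : 4 ∣ t := four_dvd_of_selfdual L hLsd
  omega
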